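/- Let d = 1, Q a uniform quantizer of step Δ > 0, L: ℝ → ℝ be G-Lipschitz, ε > 0, W ∈ ℝ, and t = r(W)/ε where r(W) is the distance from W to the nearest quantization threshold (t > 0). Then the gradient of the smoothed quantized objective f_ε(W) = E_{u~N(0,1)} L(Q(W + εu)) satisfies |∇f_ε(W)| ≤ (G/√(2π)) (Δ/ε + 2t + 2/t) e^{-t²/2}. -/

import Mathlib

open MeasureTheory ProbabilityTheory Real

open Set Metric Filter

namespace SQaux

noncomputable def gg (x : ℝ) : ℝ := Real.exp (-x ^ 2 / 2)

lemma gg_pos (x : ℝ) : 0 < gg x := Real.exp_pos _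

lemma gg_eq (x : ℝ) : gg x = Real.exp (-(1/2 : ℝ) * x ^ 2) := by
  unfold gg; congr 1; ring

lemma gg_neg (x : ℝ) : gg (-x) = gg x := by unfold gg; rw [neg_pow]; ring_nf

lemma hasDerivAt_gg (x : ℝ) : HasDerivAt gg (-x * gg x) x := by
  have h : HasDerivAt (fun y : ℝ => -y ^ 2 / 2) (-x) x := by
    have := ((hasDerivAt_pow 2 x).neg).div_const 2
    refine this.congr_deriv ?_
    simp [pow_one]; ring
  have := h.exp
  have e : ∀ y : ℝ, Real.exp (-y ^ 2 / 2) = gg y := fun y => rfl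
  show HasDerivAt (fun y => Real.exp (-y ^ 2 / 2)) (-x * Real.exp (-x ^ 2 / 2)) x
  simpa [mul_comm] using this

lemma integrable_gg : Integrable gg := by
  refine (integrable_exp_neg_mul_sq (by norm_num : (0:ℝ) < 1/2)).congr
    (Eventually.of_forall fun x => ?_)
  show Real.exp (-(1/2 : ℝ) * x ^ 2) = gg x
  rw [gg_eq]

lemma integrable_mul_gg : Integrable (fun x => x * gg x) := by
  refine (integrable_mul_exp_neg_mul_sq (by norm_num : (0:ℝ) < 1/2)).congr
    (Eventually.of_forall fun x => ?_)
  show x * Real.exp (-(1/2 : ℝ) * x ^ 2) = x * gg x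
  rw [gg_eq]

lemma integrable_abs_mul_gg : Integrable (fun x => |x| * gg x) := by
  refine integrable_mul_gg.abs.congr (Eventually.of_forall fun x => ?_)
  show |x * gg x| = |x| * gg x
  rw [abs_mul, abs_of_pos (gg_pos x)]

lemma sq_mul_exp_le {k : ℝ} (hk : 0 < k) (x : ℝ) :
    x ^ 2 * Real.exp (-k * x ^ 2) ≤ (2/k) * Real.exp (-(k/2) * x ^ 2) := by
  have h1 : (k/2) * x ^ 2 ≤ Real.exp ((k/2) * x ^ 2) := by
    nlinarith [Real.add_one_le_exp ((k/2) * x ^ 2)]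
  have h2 : Real.exp (-k * x ^ 2) = Real.exp (-(k/2) * x^2) * Real.exp (-(k/2) * x^2) := by
    rw [← Real.exp_add]; ring_nf
  have hcanc : Real.exp ((k/2) * x^2) * Real.exp (-(k/2) * x^2) = 1 := by
    rw [← Real.exp_add]; ring_nf; exact Real.exp_zero
  have h3 : x ^ 2 * Real.exp (-(k/2) * x ^ 2) ≤ 2/k := by
    calc x ^ 2 * Real.exp (-(k/2) * x ^ 2)
        ≤ ((2/k) * Real.exp ((k/2) * x ^ 2)) * Real.exp (-(k/2) * x ^ 2) := by
          apply mul_le_mul_of_nonneg_right _ (Real.exp_pos _).le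
          calc x ^ 2 = (2/k) * ((k/2) * x ^ 2) := by field_simp
            _ ≤ (2/k) * Real.exp ((k/2) * x ^ 2) :=
                mul_le_mul_of_nonneg_left h1 (by positivity)
      _ = 2/k := by rw [mul_assoc, hcanc, mul_one]
  calc x ^ 2 * Real.exp (-k * x ^ 2)
      = (x ^ 2 * Real.exp (-(k/2) * x^2)) * Real.exp (-(k/2) * x^2) := by rw [h2]; ring
    _ ≤ (2/k) * Real.exp (-(k/2) * x ^ 2) :=
        mul_le_mul_of_nonneg_right h3 (Real.exp_pos _).le

lemma integrable_sq_mul_exp {k : ℝ} (hk : 0 < k) :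
    Integrable (fun x => x ^ 2 * Real.exp (-k * x ^ 2)) := by
  refine Integrable.mono' ((integrable_exp_neg_mul_sq (by positivity : (0:ℝ) < k/2)).const_mul (2/k))
    ?_ (Eventually.of_forall fun x => ?_)
  · exact ((continuous_pow 2).mul
      (Real.continuous_exp.comp (continuous_const.mul (continuous_pow 2)))).aestronglyMeasurable
  · rw [Real.norm_eq_abs, abs_of_nonneg (by positivity)]
    exact sq_mul_exp_le hk x

lemma integrable_abs_mul_exp {k : ℝ} (hk : 0 < k) :
    Integrable (fun x => |x| * Real.exp (-k * x ^ 2)) := by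
  refine (integrable_mul_exp_neg_mul_sq hk).abs.congr (Eventually.of_forall fun x => ?_)
  show |x * Real.exp (-k * x ^ 2)| = |x| * Real.exp (-k * x ^ 2)
  rw [abs_mul, abs_of_pos (Real.exp_pos _)]

lemma integrable_sq_mul_gg : Integrable (fun x => x ^ 2 * gg x) := by
  refine (integrable_sq_mul_exp (by norm_num : (0:ℝ) < 1/2)).congr
    (Eventually.of_forall fun x => ?_)
  show x ^ 2 * Real.exp (-(1/2 : ℝ) * x ^ 2) = x ^ 2 * gg x
  rw [gg_eq]

lemma integrable_poly_exp {k : ℝ} (hk : 0 < k) (a b c : ℝ) :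
    Integrable (fun x => (a + b * |x| + c * x ^ 2) * Real.exp (-k * x ^ 2)) := by
  have h := (((integrable_exp_neg_mul_sq hk).const_mul a).add
    ((integrable_abs_mul_exp hk).const_mul b)).add ((integrable_sq_mul_exp hk).const_mul c)
  refine h.congr (Eventually.of_forall fun x => ?_)
  simp only [Pi.add_apply]
  ring

lemma integrable_poly_gg (a b c : ℝ) :
    Integrable (fun x => (a + b * |x| + c * x ^ 2) * gg x) := by
  refine (integrable_poly_exp (by norm_num : (0:ℝ) < 1/2) a b c).congr
    (Eventually.of_forall fun x => ?_)
  show (a + b * |x| + c * x ^ 2) * Real.exp (-(1/2 : ℝ) * x ^ 2)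
      = (a + b * |x| + c * x ^ 2) * gg x
  rw [gg_eq]

end SQaux

namespace SQaux
open SQaux

lemma tendsto_gg : Filter.Tendsto gg atTop (nhds 0) := by
  have harg : Filter.Tendsto (fun x : ℝ => x ^ 2 / 2) atTop atTop :=
    (tendsto_pow_atTop two_ne_zero).atTop_div_const (by norm_num)
  have := tendsto_exp_neg_atTop_nhds_zero.comp harg
  refine this.congr fun x => ?_
  show Real.exp (-(x ^ 2 / 2)) = gg x
  unfold gg; rw [neg_div]

lemma tendsto_mul_gg : Filter.Tendsto (fun x => x * gg x) atTop (nhds 0) := by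
  have ho := rpow_mul_exp_neg_mul_sq_isLittleO_exp_neg (by norm_num : (0:ℝ) < 1/2) 1
  have ht : Filter.Tendsto (fun x : ℝ => Real.exp (-(1/2 : ℝ) * x)) atTop (nhds 0) := by
    have harg : Filter.Tendsto (fun x : ℝ => (1/2 : ℝ) * x) atTop atTop :=
      Filter.Tendsto.const_mul_atTop (by norm_num) Filter.tendsto_id
    have := tendsto_exp_neg_atTop_nhds_zero.comp harg
    refine this.congr fun x => ?_
    show Real.exp (-((1/2 : ℝ) * x)) = Real.exp (-(1/2 : ℝ) * x)
    rw [neg_mul]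
  have := ho.trans_tendsto ht
  refine this.congr fun x => ?_
  show x ^ (1:ℝ) * Real.exp (-(1/2 : ℝ) * x ^ 2) = x * gg x
  rw [Real.rpow_one, gg_eq]

lemma tail_bound {a b T : ℝ} (ha : 0 ≤ a) (hb : 0 ≤ b) (hT : 0 < T) :
    ∫ u in Ioi T, (a * u ^ 2 + b * u) * gg u ≤ (a * T + a / T + b) * gg T := by
  set F : ℝ → ℝ := fun u => -((a * u + a / T + b) * gg u) with hF
  set F' : ℝ → ℝ := fun u => (a * u ^ 2 + (a / T + b) * u - a) * gg u with hF'
  have hderiv : ∀ u : ℝ, HasDerivAt F (F' u) u := by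
    intro u
    have h1 : HasDerivAt (fun u : ℝ => a * u + a / T + b) a u := by
      have := (((hasDerivAt_id u).const_mul a).add_const (a / T)).add_const b
      simpa using this
    have h3 := (h1.mul (hasDerivAt_gg u)).neg
    refine h3.congr_deriv ?_
    simp only [hF']; ring
  have htend : Filter.Tendsto F atTop (nhds 0) := by
    have t1 := ((tendsto_mul_gg.const_mul a).add (tendsto_gg.const_mul (a/T + b))).neg
    simp only [mul_zero, add_zero, neg_zero] at t1
    refine t1.congr fun u => ?_
    simp only [hF]; ring
  have hint : Integrable F' := by
    have h := ((integrable_sq_mul_gg.const_mul a).add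
      (integrable_mul_gg.const_mul (a/T + b))).sub (integrable_gg.const_mul a)
    refine h.congr (Filter.Eventually.of_forall fun u => ?_)
    simp only [Pi.sub_apply, Pi.add_apply, hF']
    ring
  have hkey : ∫ u in Ioi T, F' u = 0 - F T :=
    integral_Ioi_of_hasDerivAt_of_tendsto' (fun x _ => hderiv x) hint.integrableOn htend
  have hlhs : Integrable (fun u => (a * u ^ 2 + b * u) * gg u) := by
    have h := (integrable_sq_mul_gg.const_mul a).add (integrable_mul_gg.const_mul b)
    refine h.congr (Filter.Eventually.of_forall fun u => ?_)
    simp only [Pi.add_apply]; ring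
  have hcmp : ∫ u in Ioi T, (a * u ^ 2 + b * u) * gg u ≤ ∫ u in Ioi T, F' u := by
    refine setIntegral_mono_on hlhs.integrableOn hint.integrableOn measurableSet_Ioi
      fun u hu => ?_
    have hu' : T < u := hu
    have h5 : a ≤ a / T * u := by
      rw [div_mul_eq_mul_div, le_div_iff₀ hT]
      nlinarith
    have hgp := gg_pos u
    simp only [hF']
    nlinarith [mul_le_mul_of_nonneg_right h5 hgp.le]
  have hft : 0 - F T = (a * T + a / T + b) * gg T := by simp only [hF]; ring
  exact hcmp.trans (le_of_eq (hkey.trans hft))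

end SQaux

namespace SQaux

lemma integral_comp_sub_div (F : ℝ → ℝ) (W' ε : ℝ) (hε : 0 < ε) :
    ∫ x : ℝ, F ((x - W') / ε) = ε * ∫ u : ℝ, F u := by
  have h1 : (∫ x : ℝ, F ((x - W') / ε)) = ∫ x : ℝ, (fun y => F (y / ε)) (x - W') := rfl
  rw [h1, integral_sub_right_eq_self (fun y => F (y / ε)) W',
    MeasureTheory.Measure.integral_comp_div (fun u => F u) ε, smul_eq_mul, abs_of_pos hε]

lemma integral_gaussianReal_eq (h : ℝ → ℝ) :
    ∫ u, h u ∂(gaussianReal 0 1) = ∫ u, gaussianPDFReal 0 1 u * h u := by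
  rw [gaussianReal_of_var_ne_zero 0 one_ne_zero]
  have hd : gaussianPDF 0 1 = fun x => ((gaussianPDFReal 0 1 x).toNNReal : ENNReal) := rfl
  rw [hd, integral_withDensity_eq_integral_smul
    ((measurable_gaussianPDFReal 0 1).real_toNNReal) h]
  congr 1
  funext u
  rw [NNReal.smul_def, smul_eq_mul, Real.coe_toNNReal _ (gaussianPDFReal_nonneg 0 1 u)]

lemma gaussianPDFReal_eq (x : ℝ) :
    gaussianPDFReal 0 1 x = (Real.sqrt (2 * Real.pi))⁻¹ * gg x := by
  simp [gaussianPDFReal, gg]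

end SQaux

section SGDproof
open SQaux

set_option maxHeartbeats 1600000 in
theorem smoothed_gradient_decay (Q : ℝ → ℝ) (Δ : ℝ) (hΔ : 0 < Δ)
    (hQstep : ∀ z, |Q z - z| ≤ Δ / 2)
    (hQcell : ∀ x y : ℝ, ⌊x / Δ⌋ = ⌊y / Δ⌋ → Q x = Q y)
    (L : ℝ → ℝ) (G : ℝ) (hG : 0 ≤ G)
    (hL : ∀ x y : ℝ, |L x - L y| ≤ G * |x - y|)
    (W ε : ℝ) (hε : 0 < ε)
    (rW : ℝ) (hrW : rW = min (W - Δ * ⌊W / Δ⌋) (Δ * (⌊W / Δ⌋ + 1) - W))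
    (t : ℝ) (htdef : t = rW / ε) (ht : 0 < t)
    (D : ℝ)
    (hgrad : HasDerivAt (fun W' => ∫ u, L (Q (W' + ε * u)) ∂(gaussianReal 0 1)) D W) :
    |D| ≤ G / Real.sqrt (2 * Real.pi) * (Δ / ε + 2 * t + 2 / t) * Real.exp (-t ^ 2 / 2) := by
  have hπ : 0 < Real.sqrt (2 * Real.pi) := Real.sqrt_pos.mpr (by positivity)
  set c : ℝ := (Real.sqrt (2 * Real.pi))⁻¹ with hc_def
  have hc : 0 < c := by positivity
  set K : ℝ → ℝ := fun x => L (Q x) with hK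
  have hrWe : rW = t * ε := by rw [htdef]; field_simp
  have hrWpos : 0 < rW := by rw [hrWe]; positivity
  -- Lipschitz continuity of L
  have hLcont : Continuous L := by
    have : LipschitzWith (Real.toNNReal G) L := by
      apply LipschitzWith.of_dist_le_mul
      intro x y
      rw [Real.dist_eq, Real.dist_eq, Real.coe_toNNReal _ hG]
      exact hL x y
    exact this.continuous
  -- measurability of Q and K
  have hQmeas : Measurable Q := by
    have hQrep : ∀ x, Q x = Q (Δ * ⌊x / Δ⌋) := by
      intro x
      refine hQcell x (Δ * ⌊x / Δ⌋) ?_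
      rw [mul_comm Δ (⌊x / Δ⌋ : ℝ), mul_div_assoc, div_self hΔ.ne', mul_one, Int.floor_intCast]
    have hrep : Q = (fun k : ℤ => Q (Δ * k)) ∘ (fun x : ℝ => ⌊x / Δ⌋) := funext fun x => hQrep x
    rw [hrep]
    exact measurable_from_top.comp ((measurable_id.div_const Δ).floor)
  have hKmeas : Measurable K := hLcont.measurable.comp hQmeas
  -- growth bound for K
  set C₀ : ℝ := |L 0| + G * (Δ / 2) with hC₀
  have hKb : ∀ x, |K x| ≤ C₀ + G * |x| := by
    intro x
    have h1 := hL (Q x) 0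
    have h2 := hQstep x
    have h3 : |K x| ≤ |L (Q x) - L 0| + |L 0| := by
      calc |K x| = |(L (Q x) - L 0) + L 0| := by simp [hK]
        _ ≤ |L (Q x) - L 0| + |L 0| := abs_add_le _ _
    have h4 : |Q x| ≤ |x| + Δ / 2 := by
      calc |Q x| = |(Q x - x) + x| := by ring_nf
        _ ≤ |Q x - x| + |x| := abs_add_le _ _
        _ ≤ Δ / 2 + |x| := by linarith
        _ = |x| + Δ / 2 := by ring
    have h5 : G * |Q x - 0| ≤ G * (|x| + Δ / 2) := by
      apply mul_le_mul_of_nonneg_left _ hG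
      simpa using h4
    simp only [hC₀]
    nlinarith
  set C₁ : ℝ := C₀ + G * |W| with hC₁
  have hC₀pos : 0 ≤ C₀ := by positivity
  have hC₁pos : 0 ≤ C₁ := by positivity
  -- Q difference bound
  have hQdiff : ∀ x y, |Q x - Q y| ≤ |x - y| + Δ := by
    intro x y
    have h1 := hQstep x
    have h2 := hQstep y
    have : |Q x - Q y| = |(Q x - x) + (x - y) + (y - Q y)| := by ring_nf
    rw [this]
    have h3 : |y - Q y| = |Q y - y| := abs_sub_comm _ _
    calc |(Q x - x) + (x - y) + (y - Q y)| ≤ |(Q x - x) + (x - y)| + |y - Q y| := abs_add_le _ _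
      _ ≤ |Q x - x| + |x - y| + |y - Q y| := by linarith [abs_add_le (Q x - x) (x - y)]
      _ ≤ |x - y| + Δ := by rw [h3]; linarith
  -- floor stability
  have floor_eq : ∀ v : ℝ, |v| < rW → ⌊(W + v) / Δ⌋ = ⌊W / Δ⌋ := by
    intro v hv
    have hA : rW ≤ W - Δ * ⌊W / Δ⌋ := hrW ▸ min_le_left _ _
    have hB : rW ≤ Δ * (⌊W / Δ⌋ + 1) - W := hrW ▸ min_le_right _ _
    obtain ⟨hv1, hv2⟩ := abs_lt.mp hv
    rw [Int.floor_eq_iff]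
    constructor
    · rw [le_div_iff₀ hΔ]
      nlinarith
    · rw [div_lt_iff₀ hΔ]
      push_cast
      nlinarith
  -- representation of the smoothed objective as a Lebesgue integral in x
  have h_repr : ∀ W' : ℝ, (∫ u, L (Q (W' + ε * u)) ∂(gaussianReal 0 1))
      = ∫ x : ℝ, (1 / ε) * (K x * (c * gg ((x - W') / ε))) := by
    intro W'
    have h1 : (∫ u, L (Q (W' + ε * u)) ∂(gaussianReal 0 1))
        = ∫ u, gaussianPDFReal 0 1 u * K (W' + ε * u) :=
      integral_gaussianReal_eq (fun u => K (W' + ε * u))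
    have h2 : (∫ u, gaussianPDFReal 0 1 u * K (W' + ε * u))
        = ∫ u, K (W' + ε * u) * (c * gg u) := by
      congr 1; funext u; rw [gaussianPDFReal_eq]; ring
    have h3 : (∫ x : ℝ, (fun u => K (W' + ε * u) * (c * gg u)) ((x - W') / ε))
        = ε * ∫ u, K (W' + ε * u) * (c * gg u) :=
      integral_comp_sub_div (fun u => K (W' + ε * u) * (c * gg u)) W' ε hε
    have h4 : ∀ x : ℝ, (fun u => K (W' + ε * u) * (c * gg u)) ((x - W') / ε)
        = K x * (c * gg ((x - W') / ε)) := by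
      intro x
      have : W' + ε * ((x - W') / ε) = x := by field_simp; ring
      simp only [this]
    rw [h1, h2]
    calc (∫ u, K (W' + ε * u) * (c * gg u))
        = (1 / ε) * (ε * ∫ u, K (W' + ε * u) * (c * gg u)) := by
            rw [← mul_assoc, one_div_mul_cancel hε.ne', one_mul]
      _ = (1 / ε) * ∫ x : ℝ, (fun u => K (W' + ε * u) * (c * gg u)) ((x - W') / ε) := by rw [h3]
      _ = (1 / ε) * ∫ x : ℝ, K x * (c * gg ((x - W') / ε)) := by
          congr 1; exact integral_congr_ae (Eventually.of_forall fun x => h4 x)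
      _ = ∫ x : ℝ, (1 / ε) * (K x * (c * gg ((x - W') / ε))) := (integral_const_mul _ _).symm
  -- abstract bound for K around W
  have hKx' : ∀ x : ℝ, |K x| ≤ C₁ + G * |x - W| := by
    intro x
    have h0 := hKb x
    have hxy : |x| ≤ |x - W| + |W| := by
      calc |x| = |(x - W) + W| := by ring_nf
        _ ≤ |x - W| + |W| := abs_add_le _ _
    have := mul_le_mul_of_nonneg_left hxy hG
    simp only [hC₁]; nlinarith
  -- constant for exponential decay of shifted gaussian
  set k : ℝ := (4 * ε ^ 2)⁻¹ with hk_def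
  have hk : 0 < k := by positivity
  -- pointwise derivative of the parametric family
  have hderiv_fam : ∀ (w x : ℝ),
      HasDerivAt (fun w' => (1 / ε) * (K x * (c * gg ((x - w') / ε))))
      ((1 / ε) * (K x * (c * (((x - w) / ε) * gg ((x - w) / ε) / ε)))) w := by
    intro w x
    have hlin : HasDerivAt (fun w' : ℝ => (x - w') / ε) (-1 / ε) w := by
      have := ((hasDerivAt_id w).const_sub x).div_const ε
      simpa using this
    have hcomp := (hasDerivAt_gg ((x - w) / ε)).comp w hlin
    have h := hcomp.const_mul ((1 / ε) * (K x * c))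
    have hfun : (fun w' => (1 / ε) * (K x * (c * gg ((x - w') / ε))))
        = fun w' => (1 / ε) * (K x * c) * ((gg ∘ fun w'' : ℝ => (x - w'') / ε) w') := by
      funext w'
      show (1 / ε) * (K x * (c * gg ((x - w') / ε))) = (1 / ε) * (K x * c) * gg ((x - w') / ε)
      ring
    rw [hfun]
    refine h.congr_deriv ?_
    symm
    show (1 / ε) * (K x * (c * ((x - w) / ε * gg ((x - w) / ε) / ε)))
        = (1 / ε) * (K x * c) * (-((x - w) / ε) * gg ((x - w) / ε) * (-1 / ε))
    ring
  -- dominating function for the derivative on the ball of radius ε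
  set bfn : ℝ → ℝ := fun y =>
    (c * Real.exp (1 / 2) / ε ^ 3) * ((C₁ + G * |y|) * ((|y| + ε) * Real.exp (-k * y ^ 2)))
    with hbfn
  have hbfn_int : Integrable bfn := by
    refine ((integrable_poly_exp hk (C₁ * ε) (C₁ + G * ε) G).const_mul
      (c * Real.exp (1 / 2) / ε ^ 3)).congr (Eventually.of_forall fun y => ?_)
    show (c * Real.exp (1 / 2) / ε ^ 3) * ((C₁ * ε + (C₁ + G * ε) * |y| + G * y ^ 2)
      * Real.exp (-k * y ^ 2)) = bfn y
    simp only [hbfn]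
    rw [← sq_abs y]
    ring
  have hbound_int : Integrable (fun x => bfn (x - W)) := hbfn_int.comp_sub_right W
  -- pointwise domination on the ball
  have h_bound : ∀ (x : ℝ), ∀ w ∈ ball W ε,
      |(1 / ε) * (K x * (c * (((x - w) / ε) * gg ((x - w) / ε) / ε)))| ≤ bfn (x - W) := by
    intro x w hw
    have hwW : |w - W| < ε := by rw [mem_ball, Real.dist_eq] at hw; exact hw
    have habs : |(1 / ε) * (K x * (c * (((x - w) / ε) * gg ((x - w) / ε) / ε)))|
        = (1 / ε) * (|K x| * (c * (|(x - w) / ε| * gg ((x - w) / ε) / ε))) := by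
      rw [abs_mul, abs_mul, abs_mul, abs_div (((x - w) / ε) * gg ((x - w) / ε)), abs_mul,
        abs_of_pos (gg_pos ((x - w) / ε)), abs_of_pos hc, abs_of_pos hε,
        abs_of_pos (by positivity : (0:ℝ) < 1 / ε)]
    have hKxb := hKx' x
    have hs1 : |(x - w) / ε| ≤ (|x - W| + ε) / ε := by
      rw [abs_div, abs_of_pos hε]
      refine div_le_div_of_nonneg_right ?_ hε.le
      calc |x - w| = |(x - W) + (W - w)| := by ring_nf
        _ ≤ |x - W| + |W - w| := abs_add_le _ _
        _ ≤ |x - W| + ε := by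
            have : |W - w| = |w - W| := abs_sub_comm _ _
            linarith [this ▸ hwW.le]
    have hs2 : gg ((x - w) / ε) ≤ Real.exp (1 / 2) * Real.exp (-k * (x - W) ^ 2) := by
      have hsq : (x - W) ^ 2 ≤ 2 * (x - w) ^ 2 + 2 * ε ^ 2 := by
        have h2 : (w - W) ^ 2 ≤ ε ^ 2 := by
          have h3 := abs_lt.mp hwW
          nlinarith [h3.1, h3.2]
        have h4 : (x - W) ^ 2 ≤ 2 * (x - w) ^ 2 + 2 * (w - W) ^ 2 := by
          nlinarith [sq_nonneg ((x - w) - (w - W))]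
        linarith
      have hiv : (ε ^ 2)⁻¹ * ε ^ 2 = 1 := inv_mul_cancel₀ (by positivity)
      have hivpos : 0 < (ε ^ 2)⁻¹ := by positivity
      have harg : -((x - w) / ε) ^ 2 / 2 ≤ 1 / 2 + -k * (x - W) ^ 2 := by
        have he : ((x - w) / ε) ^ 2 = (x - w) ^ 2 * (ε ^ 2)⁻¹ := by
          rw [div_pow]; rw [div_eq_mul_inv]
        have hke : k = (ε ^ 2)⁻¹ / 4 := by
          rw [hk_def]
          rw [show (4 : ℝ) * ε ^ 2 = ε ^ 2 * 4 from by ring, mul_inv]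
          ring
        rw [he, hke]
        nlinarith [mul_le_mul_of_nonneg_right hsq hivpos.le, sq_nonneg (x - w)]
      calc gg ((x - w) / ε) = Real.exp (-((x - w) / ε) ^ 2 / 2) := rfl
        _ ≤ Real.exp (1 / 2 + -k * (x - W) ^ 2) := Real.exp_le_exp.mpr harg
        _ = Real.exp (1 / 2) * Real.exp (-k * (x - W) ^ 2) := Real.exp_add _ _
    rw [habs]
    have hA' : 0 ≤ C₁ + G * |x - W| := add_nonneg hC₁pos (by positivity)
    have m1 : |(x - w) / ε| * gg ((x - w) / ε)
        ≤ ((|x - W| + ε) / ε) * (Real.exp (1 / 2) * Real.exp (-k * (x - W) ^ 2)) :=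
      mul_le_mul hs1 hs2 (gg_pos _).le (by positivity)
    have m1' : |(x - w) / ε| * gg ((x - w) / ε) / ε
        ≤ ((|x - W| + ε) / ε) * (Real.exp (1 / 2) * Real.exp (-k * (x - W) ^ 2)) / ε :=
      div_le_div_of_nonneg_right m1 hε.le
    have m2 : |K x| * (c * (|(x - w) / ε| * gg ((x - w) / ε) / ε))
        ≤ (C₁ + G * |x - W|) * (c * (((|x - W| + ε) / ε)
            * (Real.exp (1 / 2) * Real.exp (-k * (x - W) ^ 2)) / ε)) := by
      refine mul_le_mul hKxb (mul_le_mul_of_nonneg_left m1' hc.le)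
        (mul_nonneg hc.le (div_nonneg (mul_nonneg (abs_nonneg _) (gg_pos _).le) hε.le)) hA'
    calc (1 / ε) * (|K x| * (c * (|(x - w) / ε| * gg ((x - w) / ε) / ε)))
        ≤ (1 / ε) * ((C₁ + G * |x - W|) * (c * (((|x - W| + ε) / ε)
            * (Real.exp (1 / 2) * Real.exp (-k * (x - W) ^ 2)) / ε))) :=
          mul_le_mul_of_nonneg_left m2 (by positivity)
      _ = bfn (x - W) := by
          simp only [hbfn]
          field_simp
  -- integrability of the family at the base point
  have hggcont : Continuous gg :=
    Real.continuous_exp.comp (((continuous_pow 2).neg).div_const 2)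
  have hΦW_int : Integrable (fun x => (1 / ε) * (K x * (c * gg ((x - W) / ε)))) := by
    have hk2 : (0:ℝ) < (2 * ε ^ 2)⁻¹ := by positivity
    have hdom := (((integrable_poly_exp hk2 C₁ G 0).const_mul ((1 / ε) * c)).comp_sub_right W)
    refine Integrable.mono' hdom ?_ (Eventually.of_forall fun x => ?_)
    · have hgm : Measurable fun x : ℝ => gg ((x - W) / ε) :=
        hggcont.measurable.comp ((measurable_id'.sub measurable_const).div_const ε)
      exact ((hKmeas.mul (hgm.const_mul c)).const_mul (1 / ε)).aestronglyMeasurable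
    · have hge : gg ((x - W) / ε) = Real.exp (-(2 * ε ^ 2)⁻¹ * (x - W) ^ 2) := by
        rw [gg_eq]
        congr 1
        have hd : ((x - W) / ε) ^ 2 = (x - W) ^ 2 * (ε ^ 2)⁻¹ := by
          rw [div_pow, div_eq_mul_inv]
        rw [hd, mul_inv]
        ring
      rw [Real.norm_eq_abs, abs_mul, abs_mul,
        abs_of_pos (by positivity : (0:ℝ) < 1 / ε),
        abs_of_pos (mul_pos hc (gg_pos ((x - W) / ε)))]
      show (1 / ε) * (|K x| * (c * gg ((x - W) / ε)))
          ≤ ((1 / ε) * c) * ((C₁ + G * |x - W| + 0 * (x - W) ^ 2)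
            * Real.exp (-(2 * ε ^ 2)⁻¹ * (x - W) ^ 2))
      rw [← hge]
      calc (1 / ε) * (|K x| * (c * gg ((x - W) / ε)))
          ≤ (1 / ε) * ((C₁ + G * |x - W|) * (c * gg ((x - W) / ε))) :=
            mul_le_mul_of_nonneg_left
              (mul_le_mul_of_nonneg_right (hKx' x)
                (mul_nonneg hc.le (gg_pos _).le)) (by positivity)
        _ = ((1 / ε) * c) * ((C₁ + G * |x - W| + 0 * (x - W) ^ 2) * gg ((x - W) / ε)) := by ring
  -- measurability of the derivative integrand at W
  have hgm2 : Measurable fun x : ℝ => ((x - W) / ε) * gg ((x - W) / ε) / ε := by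
    have h1 : Measurable fun x : ℝ => (x - W) / ε :=
      (measurable_id'.sub measurable_const).div_const ε
    exact (h1.mul (hggcont.measurable.comp h1)).div_const ε
  have hF'_meas : AEStronglyMeasurable
      (fun x => (1 / ε) * (K x * (c * (((x - W) / ε) * gg ((x - W) / ε) / ε)))) volume :=
    ((hKmeas.mul (hgm2.const_mul c)).const_mul (1 / ε)).aestronglyMeasurable
  have hF_meas : ∀ᶠ w in nhds W, AEStronglyMeasurable
      (fun x => (1 / ε) * (K x * (c * gg ((x - w) / ε)))) volume := by
    refine Eventually.of_forall fun w => ?_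
    have hgm : Measurable fun x : ℝ => gg ((x - w) / ε) :=
      hggcont.measurable.comp ((measurable_id'.sub measurable_const).div_const ε)
    exact ((hKmeas.mul (hgm.const_mul c)).const_mul (1 / ε)).aestronglyMeasurable
  -- differentiation under the integral sign
  have hmain := hasDerivAt_integral_of_dominated_loc_of_deriv_le (μ := volume) (x₀ := W)
    (F := fun w x => (1 / ε) * (K x * (c * gg ((x - w) / ε))))
    (F' := fun w x => (1 / ε) * (K x * (c * (((x - w) / ε) * gg ((x - w) / ε) / ε))))
    (bound := fun x => bfn (x - W)) (ball_mem_nhds W hε) hF_meas hΦW_int hF'_meas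
    (Eventually.of_forall fun x w hw => by
      rw [Real.norm_eq_abs]; exact h_bound x w hw)
    hbound_int
    (Eventually.of_forall fun x w _ => hderiv_fam w x)
  have hD : D = ∫ x : ℝ, (1 / ε) * (K x * (c * (((x - W) / ε) * gg ((x - W) / ε) / ε))) := by
    have hfeq : (fun W' => ∫ u, L (Q (W' + ε * u)) ∂(gaussianReal 0 1))
        = fun w => ∫ x : ℝ, (1 / ε) * (K x * (c * gg ((x - w) / ε))) := funext h_repr
    rw [hfeq] at hgrad
    exact hgrad.unique hmain.2
  -- translate the derivative integral back to u-space
  have hx_sub : ∀ x : ℝ, (1 / ε) * (K x * (c * (((x - W) / ε) * gg ((x - W) / ε) / ε)))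
      = (fun u => (1 / ε) * (K (W + ε * u) * (c * (u * gg u / ε)))) ((x - W) / ε) := by
    intro x
    have hxx : W + ε * ((x - W) / ε) = x := by field_simp; ring
    simp only [hxx]
  set J : ℝ := ∫ u : ℝ, u * K (W + ε * u) * (c * gg u) with hJ
  have hDJ : D = (1 / ε) * J := by
    rw [hD, integral_congr_ae (Eventually.of_forall hx_sub),
      integral_comp_sub_div (fun u => (1 / ε) * (K (W + ε * u) * (c * (u * gg u / ε)))) W ε hε]
    have hψ : ∀ u : ℝ, (1 / ε) * (K (W + ε * u) * (c * (u * gg u / ε)))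
        = (1 / ε ^ 2) * (u * K (W + ε * u) * (c * gg u)) := by
      intro u; field_simp
    rw [integral_congr_ae (Eventually.of_forall hψ), integral_const_mul]
    rw [hJ]
    rw [← mul_assoc]
    congr 1
    field_simp
  -- integrability of the symmetrized integrands
  have hmeas_aff : ∀ a b : ℝ, Measurable fun u : ℝ => u * K (a + b * u) * (c * gg u) := by
    intro a b
    have h1 : Measurable fun u : ℝ => a + b * u :=
      (measurable_id'.const_mul b).const_add a
    exact (measurable_id'.mul (hKmeas.comp h1)).mul ((hggcont.measurable.const_mul c))
  have hint_dom : ∀ a b : ℝ, |b| ≤ ε → Integrable (fun u => u * K (a + b * u) * (c * gg u)) := by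
    intro a b hab
    set C₂ : ℝ := C₀ + G * |a| with hC₂
    have hC₂n : 0 ≤ C₂ := by rw [hC₂]; positivity
    refine Integrable.mono' ((integrable_poly_gg 0 (c * C₂) (c * G * ε)).congr
      (Eventually.of_forall fun u => rfl)) ((hmeas_aff a b).aestronglyMeasurable)
      (Eventually.of_forall fun u => ?_)
    rw [Real.norm_eq_abs, abs_mul, abs_mul, abs_of_pos (mul_pos hc (gg_pos u))]
    have hKa : |K (a + b * u)| ≤ C₂ + G * (ε * |u|) := by
      have h0 := hKb (a + b * u)
      have h1 : |a + b * u| ≤ |a| + ε * |u| := by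
        calc |a + b * u| ≤ |a| + |b * u| := abs_add_le _ _
          _ = |a| + |b| * |u| := by rw [abs_mul]
          _ ≤ |a| + ε * |u| := by
              have := mul_le_mul_of_nonneg_right hab (abs_nonneg u)
              linarith
      have := mul_le_mul_of_nonneg_left h1 hG
      rw [hC₂]; nlinarith
    have habs2 : |u| * |K (a + b * u)| ≤ |u| * (C₂ + G * (ε * |u|)) :=
      mul_le_mul_of_nonneg_left hKa (abs_nonneg u)
    calc |u| * |K (a + b * u)| * (c * gg u)
        ≤ (|u| * (C₂ + G * (ε * |u|))) * (c * gg u) :=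
          mul_le_mul_of_nonneg_right habs2 (mul_nonneg hc.le (gg_pos u).le)
      _ = (0 + (c * C₂) * |u| + (c * G * ε) * (|u| * |u|)) * gg u := by ring
      _ = (0 + (c * C₂) * |u| + (c * G * ε) * u ^ 2) * gg u := by
          rw [abs_mul_abs_self, sq]
  have hint_plus : Integrable (fun u => u * K (W + ε * u) * (c * gg u)) :=
    hint_dom W ε (by rw [abs_of_pos hε])
  have hint_minus : Integrable (fun u => u * K (W + (-ε) * u) * (c * gg u)) :=
    hint_dom W (-ε) (by rw [abs_neg, abs_of_pos hε])
  have hint_minus' : Integrable (fun u => u * K (W - ε * u) * (c * gg u)) := by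
    refine hint_minus.congr (Eventually.of_forall fun u => ?_)
    show u * K (W + -ε * u) * (c * gg u) = u * K (W - ε * u) * (c * gg u)
    rw [show W + -ε * u = W - ε * u from by ring]
  -- symmetrization
  have hsymm : (∫ u : ℝ, u * K (W - ε * u) * (c * gg u)) = -J := by
    have h0 := integral_neg_eq_self (fun u : ℝ => u * K (W - ε * u) * (c * gg u)) volume
    rw [← h0]
    have he : ∀ u : ℝ, (-u) * K (W - ε * (-u)) * (c * gg (-u))
        = -(u * K (W + ε * u) * (c * gg u)) := by
      intro u
      rw [gg_neg, show W - ε * (-u) = W + ε * u from by ring]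
      ring
    rw [integral_congr_ae (Eventually.of_forall he), integral_neg]
  have hJhalf : J = (1 / 2) * ∫ u : ℝ,
      (u * K (W + ε * u) * (c * gg u) - u * K (W - ε * u) * (c * gg u)) := by
    rw [integral_sub hint_plus hint_minus', hsymm, ← hJ]
    ring
  -- the indicator bound
  set S : Set ℝ := {v : ℝ | t ≤ |v|} with hS
  have hS_union : S = Iic (-t) ∪ Ici t := by
    ext v
    simp only [hS, mem_setOf_eq, mem_union, mem_Iic, mem_Ici, le_abs]
    constructor
    · rintro (h | h)
      · exact Or.inr h
      · exact Or.inl (by linarith)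
    · rintro (h | h)
      · exact Or.inr (by linarith)
      · exact Or.inl h
  have hSmeas : MeasurableSet S := by
    rw [hS_union]; exact measurableSet_Iic.union measurableSet_Ici
  set hfun : ℝ → ℝ := fun v => (2 * ε * v ^ 2 + Δ * |v|) * G * (c * gg v) with hhfun
  have hfun_int : Integrable hfun := by
    refine (integrable_poly_gg 0 (Δ * G * c) (2 * ε * G * c)).congr
      (Eventually.of_forall fun v => ?_)
    show (0 + (Δ * G * c) * |v| + (2 * ε * G * c) * v ^ 2) * gg v = hfun v
    simp only [hhfun]
    ring
  have hH_int : Integrable (S.indicator hfun) := hfun_int.indicator hSmeas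
  have hptw : ∀ u : ℝ, |u * K (W + ε * u) * (c * gg u) - u * K (W - ε * u) * (c * gg u)|
      ≤ S.indicator hfun u := by
    intro u
    by_cases hcase : t ≤ |u|
    · rw [indicator_of_mem (show u ∈ S from hcase)]
      have hdiff : |K (W + ε * u) - K (W - ε * u)| ≤ G * (2 * ε * |u| + Δ) := by
        have hQQ := hQdiff (W + ε * u) (W - ε * u)
        have h1 : |K (W + ε * u) - K (W - ε * u)| ≤ G * |Q (W + ε * u) - Q (W - ε * u)| := by
          simp only [hK]
          exact hL _ _
        have h2 : |(W + ε * u) - (W - ε * u)| = 2 * ε * |u| := by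
          rw [show (W + ε * u) - (W - ε * u) = (2 * ε) * u from by ring, abs_mul,
            abs_of_pos (by positivity : (0:ℝ) < 2 * ε)]
        calc |K (W + ε * u) - K (W - ε * u)| ≤ G * |Q (W + ε * u) - Q (W - ε * u)| := h1
          _ ≤ G * (|(W + ε * u) - (W - ε * u)| + Δ) := mul_le_mul_of_nonneg_left hQQ hG
          _ = G * (2 * ε * |u| + Δ) := by rw [h2]
      have hfact : u * K (W + ε * u) * (c * gg u) - u * K (W - ε * u) * (c * gg u)
          = u * (K (W + ε * u) - K (W - ε * u)) * (c * gg u) := by ring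
      rw [hfact, abs_mul, abs_mul, abs_of_pos (mul_pos hc (gg_pos u))]
      calc |u| * |K (W + ε * u) - K (W - ε * u)| * (c * gg u)
          ≤ |u| * (G * (2 * ε * |u| + Δ)) * (c * gg u) := by
            refine mul_le_mul_of_nonneg_right
              (mul_le_mul_of_nonneg_left hdiff (abs_nonneg u))
              (mul_nonneg hc.le (gg_pos u).le)
        _ = hfun u := by
            simp only [hhfun]
            rw [← sq_abs u]
            ring
    · rw [indicator_of_notMem (show u ∉ S from hcase)]
      have hlt : |u| < t := not_le.mp hcase
      have hvb : |ε * u| < rW := by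
        rw [abs_mul, abs_of_pos hε, hrWe]
        calc ε * |u| < ε * t := by exact mul_lt_mul_of_pos_left hlt hε
          _ = t * ε := by ring
      have hfloor1 : ⌊(W + ε * u) / Δ⌋ = ⌊W / Δ⌋ := floor_eq (ε * u) hvb
      have hfloor2 : ⌊(W - ε * u) / Δ⌋ = ⌊W / Δ⌋ := by
        have h0 := floor_eq (-(ε * u)) (by rwa [abs_neg])
        rwa [show W + -(ε * u) = W - ε * u from by ring] at h0
      have hQeq : Q (W + ε * u) = Q (W - ε * u) := hQcell _ _ (hfloor1.trans hfloor2.symm)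
      have hKeq : K (W + ε * u) = K (W - ε * u) := by simp only [hK]; rw [hQeq]
      rw [hKeq, sub_self, abs_zero]
  -- bound the symmetrized integral
  have hJabs : |J| ≤ (1 / 2) * ∫ u : ℝ, S.indicator hfun u := by
    rw [hJhalf, abs_mul, abs_of_pos (by norm_num : (0:ℝ) < 1 / 2)]
    refine mul_le_mul_of_nonneg_left ?_ (by norm_num)
    calc |∫ u : ℝ, (u * K (W + ε * u) * (c * gg u) - u * K (W - ε * u) * (c * gg u))|
        ≤ ∫ u : ℝ, |u * K (W + ε * u) * (c * gg u) - u * K (W - ε * u) * (c * gg u)| := by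
          rw [← Real.norm_eq_abs]
          refine (norm_integral_le_integral_norm _).trans_eq ?_
          congr 1
      _ ≤ ∫ u : ℝ, S.indicator hfun u :=
          integral_mono (hint_plus.sub hint_minus').abs hH_int hptw
  -- evaluate the indicator integral
  have hSval : (∫ u : ℝ, S.indicator hfun u)
      ≤ 2 * ((G * c) * ((2 * ε * t + 2 * ε / t + Δ) * gg t)) := by
    rw [integral_indicator hSmeas, hS_union]
    have hdisj : Disjoint (Iic (-t)) (Ici t) := by
      rw [Iic_disjoint_Ici]
      intro hcon
      linarith
    rw [setIntegral_union hdisj measurableSet_Ici hfun_int.integrableOn hfun_int.integrableOn]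
    have heven : ∀ v : ℝ, hfun (-v) = hfun v := by
      intro v
      simp only [hhfun]
      rw [gg_neg, abs_neg, neg_sq]
    have hneg : (∫ v in Iic (-t), hfun v) = ∫ v in Ioi t, hfun v := by
      have h0 := integral_comp_neg_Iic (-t) hfun
      rw [neg_neg] at h0
      rw [← h0]
      refine setIntegral_congr_fun measurableSet_Iic fun v _ => (heven v).symm
    have hIoi : (∫ v in Ioi t, hfun v) ≤ (G * c) * ((2 * ε * t + 2 * ε / t + Δ) * gg t) := by
      have hcongr : (∫ v in Ioi t, hfun v)
          = ∫ v in Ioi t, (G * c) * ((2 * ε * v ^ 2 + Δ * v) * gg v) := by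
        refine setIntegral_congr_fun measurableSet_Ioi fun v hv => ?_
        simp only [hhfun]
        rw [abs_of_pos (lt_trans ht hv)]
        ring
      rw [hcongr, integral_const_mul]
      refine mul_le_mul_of_nonneg_left ?_ (by positivity)
      exact tail_bound (a := 2 * ε) (b := Δ) (by positivity) hΔ.le ht
    have hIci : (∫ v in Ici t, hfun v) = ∫ v in Ioi t, hfun v := integral_Ici_eq_integral_Ioi
    rw [hneg, hIci]
    linarith
  -- final assembly
  have hJfinal : |J| ≤ (G * c) * ((2 * ε * t + 2 * ε / t + Δ) * gg t) := by
    calc |J| ≤ (1 / 2) * ∫ u : ℝ, S.indicator hfun u := hJabs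
      _ ≤ (1 / 2) * (2 * ((G * c) * ((2 * ε * t + 2 * ε / t + Δ) * gg t))) :=
          mul_le_mul_of_nonneg_left hSval (by norm_num)
      _ = (G * c) * ((2 * ε * t + 2 * ε / t + Δ) * gg t) := by ring
  have hDabs : |D| = (1 / ε) * |J| := by
    rw [hDJ, abs_mul, abs_of_pos (by positivity : (0:ℝ) < 1 / ε)]
  have hfinal : |D| ≤ (1 / ε) * ((G * c) * ((2 * ε * t + 2 * ε / t + Δ) * gg t)) := by
    rw [hDabs]
    exact mul_le_mul_of_nonneg_left hJfinal (by positivity)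
  have hggt : gg t = Real.exp (-t ^ 2 / 2) := rfl
  have htarget : (1 / ε) * ((G * c) * ((2 * ε * t + 2 * ε / t + Δ) * gg t))
      = G / Real.sqrt (2 * Real.pi) * (Δ / ε + 2 * t + 2 / t) * Real.exp (-t ^ 2 / 2) := by
    rw [← hggt, hc_def, div_eq_mul_inv G]
    field_simp
    ring
  rw [htarget] at hfinal
  exact hfinal



end SGDproof
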